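/- (Privacy lower bound with passports) Let W = D_γ·w, W̃ = D̃_γ·w̃ ∈ C^{m×n} (m ≥ n) with rank(W) > rank(W̃), where D_γ, D̃_γ are diagonal matrices of scaling weights and w, w̃ have spectral norm at most 1/C₂. Suppose O is a unit vector in R(W) orthogonal to R(W̃) with W̃⁺O = 0 and OᵀWWᵀO = 1. Let x = W⁺O and x̃ = W̃⁺O. Then ‖x̃ - x‖₂ ≥ 1/‖W̃ - W‖₂ ≥ 1/(‖W̃‖₂ + ‖W‖₂) ≥ C₂/(‖D_γ‖₂ + ‖D̃_γ‖₂). -/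

import Mathlib

open scoped Matrix Matrix.Norms.L2Operator

/-- The four Penrose conditions characterizing the Moore–Penrose pseudoinverse. -/
def IsMoorePenroseInverse {m n : ℕ} (W : Matrix (Fin m) (Fin n) ℂ)
    (Wp : Matrix (Fin n) (Fin m) ℂ) : Prop :=
  W * Wp * W = W ∧ Wp * W * Wp = Wp ∧ (W * Wp)ᴴ = W * Wp ∧ (Wp * W)ᴴ = Wp * W

/-- Theorem 1, Case 2 of the paper (privacy lower bound with passports):
with a rank-deficient surrogate `W̃ = D̃_γ·w̃` of the passport-protected weight
`W = D_γ·w`, the restoration error of `x̃ = W̃⁺O` versus `x = W⁺O` is bounded below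
by `C₂/(‖D_γ‖₂ + ‖D̃_γ‖₂)` through the chain of inequalities
`‖x̃ - x‖₂ ≥ 1/‖W̃ - W‖₂ ≥ 1/(‖W̃‖₂ + ‖W‖₂) ≥ C₂/(‖D_γ‖₂ + ‖D̃_γ‖₂)`. -/
theorem passport_privacy_lower_bound {m n : ℕ} (hmn : n ≤ m)
    (γ γt : Fin m → ℂ) (Dg Dgt : Matrix (Fin m) (Fin m) ℂ)
    (hD : Dg = Matrix.diagonal γ) (hDt : Dgt = Matrix.diagonal γt)
    (w wt : Matrix (Fin m) (Fin n) ℂ)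
    (C₂ : ℝ) (hC : 0 < C₂) (hw : ‖w‖ ≤ 1 / C₂) (hwt : ‖wt‖ ≤ 1 / C₂)
    (W Wt : Matrix (Fin m) (Fin n) ℂ) (hW : W = Dg * w) (hWt : Wt = Dgt * wt)
    (hrank : Wt.rank < W.rank)
    (Wp Wtp : Matrix (Fin n) (Fin m) ℂ)
    (hMP : IsMoorePenroseInverse W Wp) (hMPt : IsMoorePenroseInverse Wt Wtp)
    (O : Matrix (Fin m) (Fin 1) ℂ) (hO : ‖O‖ = 1)
    (hcol : ∃ z : Matrix (Fin n) (Fin 1) ℂ, O = W * z)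
    (horth : Wtᴴ * O = 0) (hker : Wtp * O = 0)
    (hOW : Oᴴ * W * Wᴴ * O = 1)
    (x xt : Matrix (Fin n) (Fin 1) ℂ) (hx : x = Wp * O) (hxt : xt = Wtp * O) :
    1 / ‖Wt - W‖ ≤ ‖xt - x‖ ∧
    1 / (‖Wt‖ + ‖W‖) ≤ 1 / ‖Wt - W‖ ∧
    C₂ / (‖Dg‖ + ‖Dgt‖) ≤ 1 / (‖Wt‖ + ‖W‖) := by
  obtain ⟨z, hz⟩ := hcol
  have hxt0 : xt = 0 := by rw [hxt, hker]
  -- W * Wp * O = O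
  have hWWpO : W * Wp * O = O := by
    rw [hz, ← Matrix.mul_assoc, hMP.1]
  -- Oᴴ * Wt = 0
  have hOWt : Oᴴ * Wt = 0 := by
    have := congrArg Matrix.conjTranspose horth
    simpa [Matrix.conjTranspose_mul] using this
  -- key identity
  have hkey : Oᴴ * ((Wt - W) * (xt - x)) = Oᴴ * O := by
    rw [hxt0, hx]
    have : (Wt - W) * (0 - Wp * O) = -(Wt * (Wp * O)) + W * (Wp * O) := by
      rw [Matrix.sub_mul, zero_sub, Matrix.mul_neg, Matrix.mul_neg]
      abel
    rw [this, Matrix.mul_add, Matrix.mul_neg, ← Matrix.mul_assoc, ← Matrix.mul_assoc,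
      hOWt]
    have h2 : W * (Wp * O) = O := by rw [← Matrix.mul_assoc]; exact hWWpO
    simp [h2]
  have hOO : ‖Oᴴ * O‖ = 1 := by
    rw [Matrix.l2_opNorm_conjTranspose_mul_self, hO, one_mul]
  have hprod : (1 : ℝ) ≤ ‖Wt - W‖ * ‖xt - x‖ := by
    calc (1 : ℝ) = ‖Oᴴ * ((Wt - W) * (xt - x))‖ := by rw [hkey, hOO]
      _ ≤ ‖Oᴴ‖ * ‖(Wt - W) * (xt - x)‖ := Matrix.l2_opNorm_mul _ _
      _ ≤ ‖Oᴴ‖ * (‖Wt - W‖ * ‖xt - x‖) := by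
          gcongr
          exact Matrix.l2_opNorm_mul _ _
      _ = ‖Wt - W‖ * ‖xt - x‖ := by
          rw [Matrix.l2_opNorm_conjTranspose, hO, one_mul]
  have hpos : 0 < ‖Wt - W‖ := by
    by_contra h
    push_neg at h
    have : ‖Wt - W‖ = 0 := le_antisymm h (norm_nonneg _)
    rw [this, zero_mul] at hprod; linarith
  have h1 : 1 / ‖Wt - W‖ ≤ ‖xt - x‖ := by
    rw [div_le_iff₀ hpos] at *
    nlinarith [norm_nonneg (xt - x)]
  have hWne : W ≠ 0 := by
    intro h
    rw [h, Matrix.rank_zero] at hrank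
    exact Nat.not_lt_zero _ hrank
  have hWpos : 0 < ‖W‖ := norm_pos_iff.mpr hWne
  have h2 : 1 / (‖Wt‖ + ‖W‖) ≤ 1 / ‖Wt - W‖ :=
    one_div_le_one_div_of_le hpos (norm_sub_le _ _)
  have hWb : ‖W‖ ≤ ‖Dg‖ * (1 / C₂) := by
    calc ‖W‖ ≤ ‖Dg‖ * ‖w‖ := hW ▸ Matrix.l2_opNorm_mul _ _
      _ ≤ ‖Dg‖ * (1 / C₂) := by gcongr
  have hWtb : ‖Wt‖ ≤ ‖Dgt‖ * (1 / C₂) := by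
    calc ‖Wt‖ ≤ ‖Dgt‖ * ‖wt‖ := hWt ▸ Matrix.l2_opNorm_mul _ _
      _ ≤ ‖Dgt‖ * (1 / C₂) := by gcongr
  have h3 : C₂ / (‖Dg‖ + ‖Dgt‖) ≤ 1 / (‖Wt‖ + ‖W‖) := by
    have hsum : ‖Wt‖ + ‖W‖ ≤ (‖Dg‖ + ‖Dgt‖) / C₂ := by
      have h := add_le_add hWtb hWb
      have he : ‖Dgt‖ * (1 / C₂) + ‖Dg‖ * (1 / C₂) = (‖Dg‖ + ‖Dgt‖) / C₂ := by
        field_simp; ring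
      linarith
    have hsumpos : 0 < ‖Wt‖ + ‖W‖ := by
      have := norm_nonneg Wt; linarith
    calc C₂ / (‖Dg‖ + ‖Dgt‖) = 1 / ((‖Dg‖ + ‖Dgt‖) / C₂) := by
          rw [one_div_div]
      _ ≤ 1 / (‖Wt‖ + ‖W‖) := one_div_le_one_div_of_le hsumpos hsum
  exact ⟨h1, h2, h3⟩
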